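/- Let Λ₁ and Λ₂ be positive definite d×d real matrices. Then for every vector φ ∈ ℝ^d, ‖φ‖_{Λ₁⁻¹} ≤ (1 + √(‖Λ₂⁻¹‖·‖Λ₂‖·‖Λ₁⁻¹‖·‖Λ₁ − Λ₂‖)) · ‖φ‖_{Λ₂⁻¹}, where ‖φ‖_A := √(φᵀ A φ). -/

import Mathlib

open Matrix

/-- Operator (spectral) norm of a real `d × d` matrix. -/
noncomputable def matOpNorm {d : ℕ} (M : Matrix (Fin d) (Fin d) ℝ) : ℝ :=
  ‖Matrix.toEuclideanCLM (𝕜 := ℝ) M‖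


noncomputable def toE {d : ℕ} (x : Fin d → ℝ) : EuclideanSpace ℝ (Fin d) :=
  (WithLp.equiv 2 _).symm x

lemma clm_toE {d : ℕ} (M : Matrix (Fin d) (Fin d) ℝ) (x : Fin d → ℝ) :
    toEuclideanCLM (𝕜 := ℝ) M (toE x) = toE (M *ᵥ x) := by
  simp [toE, Matrix.toLin'_apply]

lemma inner_toE {d : ℕ} (x y : Fin d → ℝ) : (inner ℝ (toE x) (toE y) : ℝ) = x ⬝ᵥ y := by
  simp [toE, PiLp.inner_apply, dotProduct, mul_comm]

lemma normsq_toE {d : ℕ} (x : Fin d → ℝ) : ‖toE x‖ ^ 2 = x ⬝ᵥ x := by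
  rw [← real_inner_self_eq_norm_sq, inner_toE]

lemma quad_le {d : ℕ} (M : Matrix (Fin d) (Fin d) ℝ) (x : Fin d → ℝ) :
    x ⬝ᵥ M *ᵥ x ≤ matOpNorm M * (x ⬝ᵥ x) := by
  have h1 : x ⬝ᵥ M *ᵥ x = (inner ℝ (toE x) (toEuclideanCLM (𝕜 := ℝ) M (toE x)) : ℝ) := by
    rw [clm_toE, inner_toE]
  rw [h1, ← normsq_toE]
  calc (inner ℝ (toE x) (toEuclideanCLM (𝕜 := ℝ) M (toE x)) : ℝ)
      ≤ ‖toE x‖ * ‖toEuclideanCLM (𝕜 := ℝ) M (toE x)‖ := real_inner_le_norm _ _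
    _ ≤ ‖toE x‖ * (matOpNorm M * ‖toE x‖) := by
        exact mul_le_mul_of_nonneg_left ((toEuclideanCLM (𝕜 := ℝ) M).le_opNorm _)
          (norm_nonneg _)
    _ = matOpNorm M * ‖toE x‖ ^ 2 := by ring

lemma matOpNorm_nonneg {d : ℕ} (M : Matrix (Fin d) (Fin d) ℝ) : 0 ≤ matOpNorm M :=
  norm_nonneg _

lemma matOpNorm_mul_le {d : ℕ} (A B : Matrix (Fin d) (Fin d) ℝ) :
    matOpNorm (A * B) ≤ matOpNorm A * matOpNorm B := by
  unfold matOpNorm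
  rw [_root_.map_mul]
  exact norm_mul_le _ _

lemma matOpNorm_sub_comm {d : ℕ} (A B : Matrix (Fin d) (Fin d) ℝ) :
    matOpNorm (A - B) = matOpNorm (B - A) := by
  unfold matOpNorm
  rw [map_sub, map_sub, norm_sub_rev]

open scoped MatrixOrder in
/-- key: `‖x‖² ≤ ‖A‖ ⬝ xᵀ A⁻¹ x` for `A` pos def. -/
lemma normsq_le_opNorm_quad_inv {d : ℕ} {A : Matrix (Fin d) (Fin d) ℝ} (hA : A.PosDef)
    (x : Fin d → ℝ) : x ⬝ᵥ x ≤ matOpNorm A * (x ⬝ᵥ A⁻¹ *ᵥ x) := by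
  set S := CFC.sqrt A with hSdef
  have hSS : S * S = A := CFC.sqrt_mul_sqrt_self A hA.posSemidef.nonneg
  have hSH : Sᴴ = S := (CFC.sqrt_nonneg A).posSemidef.1
  have hdet : IsUnit S.det := by
    have : S.det * S.det = A.det := by rw [← det_mul, hSS]
    have hAdet := hA.det_pos
    refine isUnit_iff_ne_zero.mpr ?_
    intro h0
    rw [h0, mul_zero] at this
    exact (ne_of_gt hAdet) this.symm
  -- A⁻¹ = S⁻¹ * S⁻¹
  have hAinv : A⁻¹ = S⁻¹ * S⁻¹ := by rw [← hSS, Matrix.mul_inv_rev]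
  -- x = S *ᵥ (S⁻¹ *ᵥ x)
  have hx : S *ᵥ (S⁻¹ *ᵥ x) = x := by
    rw [Matrix.mulVec_mulVec, Matrix.mul_nonsing_inv _ hdet, Matrix.one_mulVec]
  -- quadratic identity
  have hquad : x ⬝ᵥ A⁻¹ *ᵥ x = (S⁻¹ *ᵥ x) ⬝ᵥ (S⁻¹ *ᵥ x) := by
    have hT : Sᵀ = S := by
      ext i j
      have := congrFun (congrFun hSH i) j
      simpa [Matrix.conjTranspose_apply] using this
    have hsymm : (S⁻¹)ᵀ = S⁻¹ := by
      rw [Matrix.transpose_nonsing_inv, hT]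
    rw [hAinv, ← Matrix.mulVec_mulVec, Matrix.dotProduct_mulVec x S⁻¹,
      ← Matrix.mulVec_transpose, hsymm]
  -- norm of S squared = norm of A
  have hnorm : matOpNorm S * matOpNorm S = matOpNorm A := by
    unfold matOpNorm
    rw [← hSS, _root_.map_mul]
    have hstar : star (toEuclideanCLM (𝕜 := ℝ) S) = toEuclideanCLM (𝕜 := ℝ) S := by
      have hs : star S = S := by rw [Matrix.star_eq_conjTranspose, hSH]
      rw [← map_star, hs]
    rw [← CStarRing.norm_star_mul_self (x := toEuclideanCLM (𝕜 := ℝ) S), hstar]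
  calc x ⬝ᵥ x = ‖toE x‖ ^ 2 := (normsq_toE x).symm
    _ = ‖toEuclideanCLM (𝕜 := ℝ) S (toE (S⁻¹ *ᵥ x))‖ ^ 2 := by rw [clm_toE, hx]
    _ ≤ (matOpNorm S * ‖toE (S⁻¹ *ᵥ x)‖) ^ 2 := by
        have := (toEuclideanCLM (𝕜 := ℝ) S).le_opNorm (toE (S⁻¹ *ᵥ x))
        exact pow_le_pow_left₀ (norm_nonneg _) this 2
    _ = matOpNorm S * matOpNorm S * ‖toE (S⁻¹ *ᵥ x)‖ ^ 2 := by ring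
    _ = matOpNorm A * (x ⬝ᵥ A⁻¹ *ᵥ x) := by rw [hnorm, normsq_toE, hquad]

/-- Weighted (semi-)norm `‖φ‖_A = √(φᵀ A φ)`. -/
noncomputable def wNorm {d : ℕ} (A : Matrix (Fin d) (Fin d) ℝ) (φ : Fin d → ℝ) : ℝ :=
  Real.sqrt (φ ⬝ᵥ A.mulVec φ)

/-- For positive definite `Λ₁, Λ₂` and any `φ ∈ ℝ^d`,
`‖φ‖_{Λ₁⁻¹} ≤ (1 + √(‖Λ₂⁻¹‖·‖Λ₂‖·‖Λ₁⁻¹‖·‖Λ₁ − Λ₂‖)) · ‖φ‖_{Λ₂⁻¹}`. -/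
theorem stmt1 {d : ℕ} (Λ₁ Λ₂ : Matrix (Fin d) (Fin d) ℝ)
    (h₁ : Λ₁.PosDef) (h₂ : Λ₂.PosDef) (φ : Fin d → ℝ) :
    wNorm Λ₁⁻¹ φ ≤
      (1 + Real.sqrt (matOpNorm Λ₂⁻¹ * matOpNorm Λ₂ * matOpNorm Λ₁⁻¹ * matOpNorm (Λ₁ - Λ₂)))
        * wNorm Λ₂⁻¹ φ := by
  set c := matOpNorm Λ₂⁻¹ * matOpNorm Λ₂ * matOpNorm Λ₁⁻¹ * matOpNorm (Λ₁ - Λ₂) with hcdef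
  have hc : 0 ≤ c := by
    exact mul_nonneg (mul_nonneg (mul_nonneg (matOpNorm_nonneg _) (matOpNorm_nonneg _))
      (matOpNorm_nonneg _)) (matOpNorm_nonneg _)
  set q₁ := φ ⬝ᵥ Λ₁⁻¹ *ᵥ φ with hq1def
  set q₂ := φ ⬝ᵥ Λ₂⁻¹ *ᵥ φ with hq2def
  have hq₂ : 0 ≤ q₂ := by
    have := (h₂.inv.posSemidef).dotProduct_mulVec_nonneg φ
    simpa using this
  -- matrix identity
  have hdiff : Λ₁⁻¹ - Λ₂⁻¹ = Λ₁⁻¹ * (Λ₂ - Λ₁) * Λ₂⁻¹ := by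
    rw [Matrix.mul_sub, Matrix.sub_mul, mul_assoc, Matrix.mul_nonsing_inv _ (isUnit_iff_ne_zero.mpr (ne_of_gt h₂.det_pos)),
      Matrix.nonsing_inv_mul _ (isUnit_iff_ne_zero.mpr (ne_of_gt h₁.det_pos)), mul_one, one_mul]
  have key : q₁ ≤ (1 + c) * q₂ := by
    have hsplit : q₁ = q₂ + φ ⬝ᵥ (Λ₁⁻¹ - Λ₂⁻¹) *ᵥ φ := by
      rw [Matrix.sub_mulVec, dotProduct_sub]; ring
    have hb : φ ⬝ᵥ (Λ₁⁻¹ - Λ₂⁻¹) *ᵥ φ ≤ c * q₂ := by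
      calc φ ⬝ᵥ (Λ₁⁻¹ - Λ₂⁻¹) *ᵥ φ
          ≤ matOpNorm (Λ₁⁻¹ - Λ₂⁻¹) * (φ ⬝ᵥ φ) := quad_le _ _
        _ ≤ matOpNorm (Λ₁⁻¹ - Λ₂⁻¹) * (matOpNorm Λ₂ * q₂) :=
            mul_le_mul_of_nonneg_left (normsq_le_opNorm_quad_inv h₂ φ) (matOpNorm_nonneg _)
        _ ≤ (matOpNorm Λ₁⁻¹ * matOpNorm (Λ₁ - Λ₂) * matOpNorm Λ₂⁻¹) * (matOpNorm Λ₂ * q₂) := by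
            apply mul_le_mul_of_nonneg_right _ (mul_nonneg (matOpNorm_nonneg _) hq₂)
            calc matOpNorm (Λ₁⁻¹ - Λ₂⁻¹) = matOpNorm (Λ₁⁻¹ * (Λ₂ - Λ₁) * Λ₂⁻¹) := by rw [hdiff]
              _ ≤ matOpNorm (Λ₁⁻¹ * (Λ₂ - Λ₁)) * matOpNorm Λ₂⁻¹ := matOpNorm_mul_le _ _
              _ ≤ matOpNorm Λ₁⁻¹ * matOpNorm (Λ₂ - Λ₁) * matOpNorm Λ₂⁻¹ :=
                  mul_le_mul_of_nonneg_right (matOpNorm_mul_le _ _) (matOpNorm_nonneg _)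
              _ = matOpNorm Λ₁⁻¹ * matOpNorm (Λ₁ - Λ₂) * matOpNorm Λ₂⁻¹ := by
                  rw [matOpNorm_sub_comm Λ₂ Λ₁]
        _ = c * q₂ := by rw [hcdef]; ring
    linarith
  -- pass to square roots
  have h1 : Real.sqrt q₁ ≤ Real.sqrt (1 + c) * Real.sqrt q₂ := by
    rw [← Real.sqrt_mul (by linarith : (0:ℝ) ≤ 1 + c)]
    exact Real.sqrt_le_sqrt key
  have h2 : Real.sqrt (1 + c) ≤ 1 + Real.sqrt c := by
    have h3 : (0:ℝ) ≤ 1 + Real.sqrt c := by positivity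
    rw [show (1:ℝ) + Real.sqrt c = Real.sqrt ((1 + Real.sqrt c) ^ 2) from
      (Real.sqrt_sq h3).symm]
    apply Real.sqrt_le_sqrt
    nlinarith [Real.sq_sqrt hc, Real.sqrt_nonneg c]
  calc wNorm Λ₁⁻¹ φ = Real.sqrt q₁ := rfl
    _ ≤ Real.sqrt (1 + c) * Real.sqrt q₂ := h1
    _ ≤ (1 + Real.sqrt c) * Real.sqrt q₂ :=
        mul_le_mul_of_nonneg_right h2 (Real.sqrt_nonneg _)
    _ = (1 + Real.sqrt c) * wNorm Λ₂⁻¹ φ := rfl
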